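/- arXiv:2510.22741 — 7 statements merged into one kernel-verified Lean document; each statement's English description precedes it below -/
import Mathlib

section
/- Let q > 2 be a real number and set α = (q−2)/q ∈ (0,1). Define u : ℝ → ℝ by u(x) = sign(x)·|x|^α. Then for every x ≠ 0, u is twice differentiable at x with u'(x) = α|x|^{α−1} > 0 and u''(x) = α(α−1)·sign(x)·|x|^{α−2}, and u satisfies the pointwise identity arctan(u''(x)) = −arctan( (1−α)·α^{1−q} · u(x) · (u'(x))^q ), where (u'(x))^q denotes the real power of the positive number u'(x). -/
open Real

/-- the function u(x) = sign(x)·|x|^α with α = (q−2)/q, q > 2, solves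
arctan(u'') = −arctan((1−α)·α^{1−q}·u·(u')^q) away from the origin. -/
theorem singular_solution_fails_monotonicity
    (q : ℝ) (hq : 2 < q) (α : ℝ) (hα : α = (q - 2) / q) :
    α ∈ Set.Ioo (0 : ℝ) 1 ∧
    ∀ x : ℝ, x ≠ 0 →
      HasDerivAt (fun y : ℝ => Real.sign y * |y| ^ α) (α * |x| ^ (α - 1)) x ∧
      0 < α * |x| ^ (α - 1) ∧
      HasDerivAt (fun y : ℝ => α * |y| ^ (α - 1))
        (α * (α - 1) * Real.sign x * |x| ^ (α - 2)) x ∧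
      Real.arctan (α * (α - 1) * Real.sign x * |x| ^ (α - 2)) =
        - Real.arctan ((1 - α) * α ^ (1 - q) * (Real.sign x * |x| ^ α) *
          (α * |x| ^ (α - 1)) ^ q) := by
  have hq0 : (0:ℝ) < q := by linarith
  have hα0 : 0 < α := by rw [hα]; exact div_pos (by linarith) hq0
  have hα1 : α < 1 := by rw [hα, div_lt_one hq0]; linarith
  have h2 : (α - 1) * q = -2 := by
    rw [hα]; field_simp; ring
  have key : ∀ x : ℝ, x ≠ 0 →
      (1 - α) * α ^ (1 - q) * (Real.sign x * |x| ^ α) * (α * |x| ^ (α - 1)) ^ q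
        = -(α * (α - 1) * Real.sign x * |x| ^ (α - 2)) := by
    intro x hx
    have hr : (0:ℝ) < |x| := abs_pos.mpr hx
    have e1 : (α * |x| ^ (α - 1)) ^ q = α ^ q * |x| ^ ((α - 1) * q) := by
      rw [Real.mul_rpow hα0.le (Real.rpow_nonneg hr.le _), ← Real.rpow_mul hr.le]
    have e2 : α ^ (1 - q) * α ^ q = α := by
      rw [← Real.rpow_add hα0]; simp
    have e3 : |x| ^ α * |x| ^ ((α - 1) * q) = |x| ^ (α - 2) := by
      rw [h2, ← Real.rpow_add hr, show α + -2 = α - 2 from by ring]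
    rw [e1]
    calc (1 - α) * α ^ (1 - q) * (Real.sign x * |x| ^ α) * (α ^ q * |x| ^ ((α - 1) * q))
        = (1 - α) * Real.sign x * (α ^ (1 - q) * α ^ q) * (|x| ^ α * |x| ^ ((α - 1) * q)) := by
          ring
      _ = (1 - α) * Real.sign x * α * |x| ^ (α - 2) := by rw [e2, e3]
      _ = -(α * (α - 1) * Real.sign x * |x| ^ (α - 2)) := by ring
  refine ⟨⟨hα0, hα1⟩, fun x hx => ?_⟩
  have hr : (0:ℝ) < |x| := abs_pos.mpr hx
  have hd : HasDerivAt (fun y : ℝ => Real.sign y * |y| ^ α) (α * |x| ^ (α - 1)) x ∧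
      HasDerivAt (fun y : ℝ => α * |y| ^ (α - 1))
        (α * (α - 1) * Real.sign x * |x| ^ (α - 2)) x := by
    rcases hx.lt_or_gt with hneg | hpos
    · -- x < 0
      have hne : -x ≠ 0 := by simp [hx]
      have habs : |x| = -x := abs_of_neg hneg
      have hs : Real.sign x = -1 := Real.sign_of_neg hneg
      have hev : ∀ᶠ y in nhds x, y < 0 := eventually_lt_nhds hneg
      constructor
      · have h1 : HasDerivAt (fun y : ℝ => ((-y) ^ α))
            (α * (-x) ^ (α - 1) * (-1)) x :=
          (Real.hasDerivAt_rpow_const (Or.inl hne)).comp x (hasDerivAt_neg x)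
        have h1' : HasDerivAt (fun y : ℝ => -((-y) ^ α))
            (α * (-x) ^ (α - 1)) x := by
          have := h1.neg
          simpa [Pi.neg_def] using this
        refine h1'.congr_of_eventuallyEq ?_ |>.congr_deriv ?_
        · filter_upwards [hev] with y hy
          rw [Real.sign_of_neg hy, abs_of_neg hy]; ring
        · rw [habs]
      · have h1 : HasDerivAt (fun y : ℝ => ((-y) ^ (α - 1)))
            ((α - 1) * (-x) ^ (α - 1 - 1) * (-1)) x :=
          (Real.hasDerivAt_rpow_const (Or.inl hne)).comp x (hasDerivAt_neg x)
        have h1' := h1.const_mul α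
        refine h1'.congr_of_eventuallyEq ?_ |>.congr_deriv ?_
        · filter_upwards [hev] with y hy
          rw [abs_of_neg hy]
        · rw [habs, hs]; ring_nf
    · -- 0 < x
      have habs : |x| = x := abs_of_pos hpos
      have hs : Real.sign x = 1 := Real.sign_of_pos hpos
      have hev : ∀ᶠ y in nhds x, 0 < y := eventually_gt_nhds hpos
      constructor
      · have h1 : HasDerivAt (fun y : ℝ => y ^ α) (α * x ^ (α - 1)) x :=
          Real.hasDerivAt_rpow_const (Or.inl hx)
        refine h1.congr_of_eventuallyEq ?_ |>.congr_deriv ?_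
        · filter_upwards [hev] with y hy
          rw [Real.sign_of_pos hy, abs_of_pos hy]; ring
        · rw [habs]
      · have h1 : HasDerivAt (fun y : ℝ => y ^ (α - 1))
            ((α - 1) * x ^ (α - 1 - 1)) x := Real.hasDerivAt_rpow_const (Or.inl hx)
        have h1' := h1.const_mul α
        refine h1'.congr_of_eventuallyEq ?_ |>.congr_deriv ?_
        · filter_upwards [hev] with y hy
          rw [abs_of_pos hy]
        · rw [habs, hs]; ring_nf
  refine ⟨hd.1, ?_, hd.2, ?_⟩
  · positivity
  · rw [key x hx, arctan_neg, neg_neg]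
end

section
/- Let m ≥ 0 be an integer, let q > 2 be a real number, and set α = (q−2)/(2m+q) ∈ (0,1). Define u : ℝ → ℝ by u(x) = sign(x)·|x|^α. Then for every x ≠ 0, u is twice differentiable at x with u'(x) = α|x|^{α−1} > 0, and u satisfies the pointwise identity u''(x) = (α−1)·α^{1−q} · u(x)^{2m+1} · (u'(x))^q; equivalently, arctan(u''(x)) = −arctan( (1−α)·α^{1−q} · u(x)^{2m+1} · (u'(x))^q ). -/
open Real

/-- the function u(x) = sign(x)·|x|^α with α = (q−2)/(2m+q), q > 2, satisfies
u'' = (α−1)·α^{1−q}·u^{2m+1}·(u')^q away from the origin, equivalently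
arctan(u'') = −arctan((1−α)·α^{1−q}·u^{2m+1}·(u')^q). -/
theorem singular_solution_odd_power
    (m : ℕ) (q : ℝ) (hq : 2 < q) (α : ℝ) (hα : α = (q - 2) / (2 * m + q)) :
    α ∈ Set.Ioo (0 : ℝ) 1 ∧
    ∀ x : ℝ, x ≠ 0 →
      HasDerivAt (fun y : ℝ => Real.sign y * |y| ^ α) (α * |x| ^ (α - 1)) x ∧
      0 < α * |x| ^ (α - 1) ∧
      (∃ d : ℝ, HasDerivAt (fun y : ℝ => α * |y| ^ (α - 1)) d x ∧
        d = (α - 1) * α ^ (1 - q) * (Real.sign x * |x| ^ α) ^ (2 * m + 1) *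
          (α * |x| ^ (α - 1)) ^ q ∧
        Real.arctan d =
          - Real.arctan ((1 - α) * α ^ (1 - q) * (Real.sign x * |x| ^ α) ^ (2 * m + 1) *
            (α * |x| ^ (α - 1)) ^ q)) := by
  have hm : (0:ℝ) ≤ 2 * m := by positivity
  have hden : (0:ℝ) < 2 * m + q := by linarith
  have hα0 : 0 < α := by rw [hα]; exact div_pos (by linarith) hden
  have hα1 : α < 1 := by rw [hα, div_lt_one hden]; linarith
  have hα' : α * (2 * m + q) = q - 2 := by
    rw [hα]; field_simp
  refine ⟨⟨hα0, hα1⟩, ?_⟩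
  intro x hx
  have hxabs : 0 < |x| := abs_pos.mpr hx
  have hpos : 0 < α * |x| ^ (α - 1) := by positivity
  -- first derivative
  have hderiv : HasDerivAt (fun y : ℝ => Real.sign y * |y| ^ α) (α * |x| ^ (α - 1)) x := by
    rcases hx.lt_or_gt with hneg | hposx
    · have h1 : HasDerivAt (fun y : ℝ => (-y) ^ α) (α * (-x) ^ (α - 1) * (-1)) x := by
        have h0 : HasDerivAt (fun t : ℝ => t ^ α) (α * (-x) ^ (α - 1)) (-x) :=
          Real.hasDerivAt_rpow_const (Or.inl (by linarith))
        exact h0.comp x (hasDerivAt_neg x)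
      have h2 : HasDerivAt (fun y : ℝ => -((-y) ^ α)) (α * (-x) ^ (α - 1)) x := by
        have h := h1.neg
        rw [show -(α * (-x) ^ (α - 1) * (-1)) = α * (-x) ^ (α - 1) by ring] at h
        exact h
      have h3 : (fun y : ℝ => Real.sign y * |y| ^ α) =ᶠ[nhds x] fun y : ℝ => -((-y) ^ α) := by
        filter_upwards [Iio_mem_nhds hneg] with y hy
        rw [Real.sign_of_neg hy, abs_of_neg hy]
        ring
      have := h2.congr_of_eventuallyEq h3
      rwa [abs_of_neg hneg]
    · have h1 : HasDerivAt (fun y : ℝ => y ^ α) (α * x ^ (α - 1)) x :=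
        Real.hasDerivAt_rpow_const (Or.inl hx)
      have h3 : (fun y : ℝ => Real.sign y * |y| ^ α) =ᶠ[nhds x] fun y : ℝ => y ^ α := by
        filter_upwards [Ioi_mem_nhds hposx] with y hy
        rw [Real.sign_of_pos hy, abs_of_pos hy, one_mul]
      have := h1.congr_of_eventuallyEq h3
      rwa [abs_of_pos hposx]
  -- second derivative
  have hd2 : HasDerivAt (fun y : ℝ => α * |y| ^ (α - 1))
      (α * (α - 1) * Real.sign x * |x| ^ (α - 2)) x := by
    rcases hx.lt_or_gt with hneg | hposx
    · have h0 : HasDerivAt (fun t : ℝ => t ^ (α - 1)) ((α - 1) * (-x) ^ (α - 1 - 1)) (-x) :=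
        Real.hasDerivAt_rpow_const (Or.inl (by linarith))
      have h1 : HasDerivAt (fun y : ℝ => α * (-y) ^ (α - 1))
          (α * ((α - 1) * (-x) ^ (α - 1 - 1) * (-1))) x :=
        (h0.comp x (hasDerivAt_neg x)).const_mul α
      have h3 : (fun y : ℝ => α * |y| ^ (α - 1)) =ᶠ[nhds x] fun y : ℝ => α * (-y) ^ (α - 1) := by
        filter_upwards [Iio_mem_nhds hneg] with y hy
        rw [abs_of_neg hy]
      have h4 := h1.congr_of_eventuallyEq h3
      have : α * ((α - 1) * (-x) ^ (α - 1 - 1) * (-1))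
          = α * (α - 1) * Real.sign x * |x| ^ (α - 2) := by
        rw [Real.sign_of_neg hneg, abs_of_neg hneg]
        ring_nf
      rwa [this] at h4
    · have h0 : HasDerivAt (fun t : ℝ => t ^ (α - 1)) ((α - 1) * x ^ (α - 1 - 1)) x :=
        Real.hasDerivAt_rpow_const (Or.inl hx)
      have h1 : HasDerivAt (fun y : ℝ => α * y ^ (α - 1))
          (α * ((α - 1) * x ^ (α - 1 - 1))) x := h0.const_mul α
      have h3 : (fun y : ℝ => α * |y| ^ (α - 1)) =ᶠ[nhds x] fun y : ℝ => α * y ^ (α - 1) := by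
        filter_upwards [Ioi_mem_nhds hposx] with y hy
        rw [abs_of_pos hy]
      have h4 := h1.congr_of_eventuallyEq h3
      have : α * ((α - 1) * x ^ (α - 1 - 1))
          = α * (α - 1) * Real.sign x * |x| ^ (α - 2) := by
        rw [Real.sign_of_pos hposx, abs_of_pos hposx]
        ring_nf
      rwa [this] at h4
  -- algebraic identity
  have hs : Real.sign x = 1 ∨ Real.sign x = -1 := by
    rcases hx.lt_or_gt with h | h
    · exact Or.inr (Real.sign_of_neg h)
    · exact Or.inl (Real.sign_of_pos h)
  have hspow : (Real.sign x) ^ (2 * m + 1) = Real.sign x := by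
    rcases hs with h | h <;> rw [h]
    · simp
    · exact Odd.neg_one_pow ⟨m, by ring⟩
  have hexp : α * (2 * (m:ℝ) + 1) + (α - 1) * q = α - 2 := by
    linear_combination hα'
  have heq : α * (α - 1) * Real.sign x * |x| ^ (α - 2)
      = (α - 1) * α ^ (1 - q) * (Real.sign x * |x| ^ α) ^ (2 * m + 1) *
        (α * |x| ^ (α - 1)) ^ q := by
    rw [mul_pow, hspow, ← Real.rpow_natCast (|x| ^ α) (2 * m + 1),
      ← Real.rpow_mul (abs_nonneg x),
      Real.mul_rpow hα0.le (Real.rpow_nonneg (abs_nonneg x) _),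
      ← Real.rpow_mul (abs_nonneg x)]
    have e1 : α ^ (1 - q) * α ^ q = α := by
      rw [← Real.rpow_add hα0]; norm_num
    have e2 : |x| ^ (α * ((2 * m + 1 : ℕ) : ℝ)) * |x| ^ ((α - 1) * q) = |x| ^ (α - 2) := by
      rw [← Real.rpow_add hxabs]
      congr 1
      push_cast
      linear_combination hexp
    calc α * (α - 1) * Real.sign x * |x| ^ (α - 2)
        = (α - 1) * (α ^ (1 - q) * α ^ q) * Real.sign x *
          (|x| ^ (α * ((2 * m + 1 : ℕ) : ℝ)) * |x| ^ ((α - 1) * q)) := by rw [e1, e2]; ring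
      _ = (α - 1) * α ^ (1 - q) * (Real.sign x * |x| ^ (α * ((2 * m + 1 : ℕ) : ℝ))) *
          (α ^ q * |x| ^ ((α - 1) * q)) := by ring
  refine ⟨hderiv, hpos, _, hd2, heq, ?_⟩
  have hneg' : (1 - α) * α ^ (1 - q) * (Real.sign x * |x| ^ α) ^ (2 * m + 1) *
      (α * |x| ^ (α - 1)) ^ q = -(α * (α - 1) * Real.sign x * |x| ^ (α - 2)) := by
    rw [heq]; ring
  rw [hneg', Real.arctan_neg, neg_neg]
end

section
/- Let m ≥ 0 be an integer, let q > 3 + 2m be a real number, and set α = (q−3−2m)/(q−1) ∈ (0,1). Define u : ℝ → ℝ by u(x) = sign(x)·|x|^α. Then for every x ≠ 0, u is twice differentiable at x with u'(x) = α|x|^{α−1} > 0, and u satisfies the pointwise identity u''(x) = (α−1)·α^{1−q} · x^{2m+1} · (u'(x))^q; equivalently, arctan(u''(x)) = −arctan( (1−α)·α^{1−q} · x^{2m+1} · (u'(x))^q ). -/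
open Real

lemma aux_hasDerivAt_abs_rpow (β : ℝ) {x : ℝ} (hx : x ≠ 0) :
    HasDerivAt (fun y : ℝ => |y| ^ β) (β * |x| ^ (β - 1) * Real.sign x) x := by
  rcases hx.lt_or_gt with h | h
  · have h1 : HasDerivAt (fun y : ℝ => (-y) ^ β) (β * (-x) ^ (β - 1) * (-1)) x := by
      have := (Real.hasDerivAt_rpow_const (x := -x) (p := β)
        (Or.inl (neg_ne_zero.2 hx))).comp x (hasDerivAt_neg x)
      simpa [Function.comp_def] using this
    have heq : (fun y : ℝ => |y| ^ β) =ᶠ[nhds x] (fun y : ℝ => (-y) ^ β) := by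
      filter_upwards [Iio_mem_nhds h] with y hy
      rw [abs_of_neg hy]
    have := h1.congr_of_eventuallyEq heq
    simpa [abs_of_neg h, Real.sign_of_neg h] using this
  · have h1 : HasDerivAt (fun y : ℝ => y ^ β) (β * x ^ (β - 1)) x :=
      Real.hasDerivAt_rpow_const (Or.inl hx)
    have heq : (fun y : ℝ => |y| ^ β) =ᶠ[nhds x] (fun y : ℝ => y ^ β) := by
      filter_upwards [Ioi_mem_nhds h] with y hy
      rw [abs_of_pos hy]
    have := h1.congr_of_eventuallyEq heq
    simpa [abs_of_pos h, Real.sign_of_pos h] using this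

lemma aux_hasDerivAt_u (α : ℝ) {x : ℝ} (hx : x ≠ 0) :
    HasDerivAt (fun y : ℝ => Real.sign y * |y| ^ α) (α * |x| ^ (α - 1)) x := by
  have h := aux_hasDerivAt_abs_rpow α hx
  rcases hx.lt_or_gt with hlt | hlt
  · have heq : (fun y : ℝ => Real.sign y * |y| ^ α) =ᶠ[nhds x]
        (fun y : ℝ => -(|y| ^ α)) := by
      filter_upwards [Iio_mem_nhds hlt] with y hy
      rw [Real.sign_of_neg hy]; ring
    have h2 := h.neg.congr_of_eventuallyEq heq
    have : -(α * |x| ^ (α - 1) * Real.sign x) = α * |x| ^ (α - 1) := by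
      rw [Real.sign_of_neg hlt]; ring
    rwa [this] at h2
  · have heq : (fun y : ℝ => Real.sign y * |y| ^ α) =ᶠ[nhds x]
        (fun y : ℝ => |y| ^ α) := by
      filter_upwards [Ioi_mem_nhds hlt] with y hy
      rw [Real.sign_of_pos hy]; ring
    have h2 := h.congr_of_eventuallyEq heq
    have : α * |x| ^ (α - 1) * Real.sign x = α * |x| ^ (α - 1) := by
      rw [Real.sign_of_pos hlt]; ring
    rwa [this] at h2

lemma aux_key_calc (m : ℕ) (q α t : ℝ) (hα : 0 < α)
    (hk : (α - 1) * q = α - 3 - 2 * m) (ht : 0 < t) :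
    (α - 1) * α ^ (1 - q) * t ^ (2 * m + 1) * (α * t ^ (α - 1)) ^ q
      = α * ((α - 1) * t ^ (α - 1 - 1)) := by
  have h1 : α ^ (1 - q) * α ^ q = α := by
    rw [← Real.rpow_add hα]; simp
  have h2 : t ^ (2 * (m : ℝ) + 1) * t ^ ((α - 1) * q) = t ^ (α - 1 - 1) := by
    rw [← Real.rpow_add ht]; congr 1; rw [hk]; ring
  have h3 : (α * t ^ (α - 1)) ^ q = α ^ q * t ^ ((α - 1) * q) := by
    rw [Real.mul_rpow hα.le (Real.rpow_nonneg ht.le _), ← Real.rpow_mul ht.le]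
  have h4 : (t : ℝ) ^ (2 * m + 1) = t ^ (2 * (m : ℝ) + 1) := by
    rw [← Real.rpow_natCast t (2 * m + 1)]; norm_num
  calc (α - 1) * α ^ (1 - q) * t ^ (2 * m + 1) * (α * t ^ (α - 1)) ^ q
      = (α - 1) * (α ^ (1 - q) * α ^ q) *
          (t ^ (2 * (m : ℝ) + 1) * t ^ ((α - 1) * q)) := by rw [h3, h4]; ring
    _ = α * ((α - 1) * t ^ (α - 1 - 1)) := by rw [h1, h2]; ring

/-- the function u(x) = sign(x)·|x|^α with α = (q−3−2m)/(q−1), q > 3+2m, satisfies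
u'' = (α−1)·α^{1−q}·x^{2m+1}·(u')^q away from the origin, equivalently
arctan(u'') = −arctan((1−α)·α^{1−q}·x^{2m+1}·(u')^q). -/
theorem singular_solution_x_power
    (m : ℕ) (q : ℝ) (hq : 3 + 2 * (m : ℝ) < q) (α : ℝ)
    (hα : α = (q - 3 - 2 * m) / (q - 1)) :
    α ∈ Set.Ioo (0 : ℝ) 1 ∧
    ∀ x : ℝ, x ≠ 0 →
      HasDerivAt (fun y : ℝ => Real.sign y * |y| ^ α) (α * |x| ^ (α - 1)) x ∧
      0 < α * |x| ^ (α - 1) ∧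
      (∃ d : ℝ, HasDerivAt (fun y : ℝ => α * |y| ^ (α - 1)) d x ∧
        d = (α - 1) * α ^ (1 - q) * x ^ (2 * m + 1) * (α * |x| ^ (α - 1)) ^ q ∧
        Real.arctan d =
          - Real.arctan ((1 - α) * α ^ (1 - q) * x ^ (2 * m + 1) *
            (α * |x| ^ (α - 1)) ^ q)) := by
  have hm : (0 : ℝ) ≤ (m : ℝ) := Nat.cast_nonneg m
  have hq1 : (1 : ℝ) < q := by linarith
  have hq1' : q - 1 ≠ 0 := by linarith
  have hαpos : 0 < α := by
    rw [hα]; exact div_pos (by linarith) (by linarith)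
  have hα1 : α < 1 := by
    rw [hα, div_lt_one (by linarith : (0:ℝ) < q - 1)]; linarith
  have hk : (α - 1) * q = α - 3 - 2 * m := by
    rw [hα]; field_simp; ring
  refine ⟨⟨hαpos, hα1⟩, fun x hx => ?_⟩
  have hxabs : 0 < |x| := abs_pos.2 hx
  refine ⟨aux_hasDerivAt_u α hx,
    mul_pos hαpos (Real.rpow_pos_of_pos hxabs _), ?_⟩
  refine ⟨α * ((α - 1) * |x| ^ (α - 1 - 1) * Real.sign x),
    (aux_hasDerivAt_abs_rpow (α - 1) hx).const_mul α, ?_, ?_⟩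
  · -- the identity
    rcases hx.lt_or_gt with h | h
    · have hs : Real.sign x = -1 := Real.sign_of_neg h
      have habs : |x| = -x := abs_of_neg h
      have hodd : x ^ (2 * m + 1) = -((-x) ^ (2 * m + 1)) := by
        have : Odd (2 * m + 1) := ⟨m, by ring⟩
        rw [this.neg_pow]; ring
      rw [hs, habs, hodd]
      have := aux_key_calc m q α (-x) hαpos hk (by linarith)
      linarith [this]
    · have hs : Real.sign x = 1 := Real.sign_of_pos h
      have habs : |x| = x := abs_of_pos h
      rw [hs, habs, mul_one]
      exact (aux_key_calc m q α x hαpos hk h).symm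
  · have : α * ((α - 1) * |x| ^ (α - 1 - 1) * Real.sign x)
        = (α - 1) * α ^ (1 - q) * x ^ (2 * m + 1) * (α * |x| ^ (α - 1)) ^ q := by
      rcases hx.lt_or_gt with h | h
      · have hs : Real.sign x = -1 := Real.sign_of_neg h
        have habs : |x| = -x := abs_of_neg h
        have hodd : x ^ (2 * m + 1) = -((-x) ^ (2 * m + 1)) := by
          have : Odd (2 * m + 1) := ⟨m, by ring⟩
          rw [this.neg_pow]; ring
        rw [hs, habs, hodd]
        have := aux_key_calc m q α (-x) hαpos hk (by linarith)
        linarith [this]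
      · have hs : Real.sign x = 1 := Real.sign_of_pos h
        have habs : |x| = x := abs_of_pos h
        rw [hs, habs, mul_one]
        exact (aux_key_calc m q α x hαpos hk h).symm
    rw [this, show (α - 1) * α ^ (1 - q) * x ^ (2 * m + 1) * (α * |x| ^ (α - 1)) ^ q
      = -((1 - α) * α ^ (1 - q) * x ^ (2 * m + 1) * (α * |x| ^ (α - 1)) ^ q) by ring,
      Real.arctan_neg]
end

section
/- Let n ≥ 1, let λ₁,…,λₙ ∈ ℝ, and let A ∈ ℝ. Define the n×n matrix H by H_{ij} = (A + 2λ_i δ_{ij}) / ( (1+λ_i²)(1+λ_j²) ), where δ_{ij} is the Kronecker delta. Then det H = ( A·2^{n−1}·σ_{n−1}(λ) + 2ⁿ·σₙ(λ) ) / ∏_{i=1}^n (1+λ_i²)². -/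
open Real

noncomputable section

open Matrix Finset

lemma det_updateRow_eq (n:ℕ) (D : Matrix (Fin n) (Fin n) ℝ) (i : Fin n) (u : Fin n → ℝ) :
    (D.updateRow i u).det = ∑ j, u j * adjugate D j i := by
  rw [det_eq_sum_mul_adjugate_row _ i]
  refine Finset.sum_congr rfl fun j _ => ?_
  rw [updateRow_self]
  congr 1
  rw [adjugate_apply, adjugate_apply]
  congr 1
  ext a b
  simp only [updateRow_apply]
  by_cases h : a = i <;> simp [h]

lemma det_diag_add_const (n : ℕ) (d : Fin n → ℝ) (A : ℝ) :
    Matrix.det (Matrix.of fun i j : Fin n => (if i = j then d i else 0) + A) =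
      (∏ i, d i) + A * ∑ i, ∏ j ∈ Finset.univ.erase i, d j := by
  classical
  set m : Fin n → Fin n → ℝ := fun i => Pi.single i (d i) with hm
  set m' : Fin n → Fin n → ℝ := fun _ _ => A with hm'
  have hmd : (m : Matrix (Fin n) (Fin n) ℝ) = Matrix.diagonal d := by
    ext i j
    by_cases h : i = j <;> simp [m, Matrix.diagonal, h, Pi.single_apply, eq_comm]
  have hM : (Matrix.of fun i j : Fin n => (if i = j then d i else 0) + A) = m + m' := by
    ext i j
    by_cases h : i = j <;> simp [m, m', Pi.single_apply, h, eq_comm]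
  rw [hM]
  have hdet : Matrix.det (m + m') = Matrix.detRowAlternating (m + m') := rfl
  rw [hdet]
  erw [(Matrix.detRowAlternating (R := ℝ) (n := Fin n)).toMultilinearMap.map_add_univ m m']
  set f : Finset (Fin n) → ℝ := fun s => Matrix.detRowAlternating (s.piecewise m m') with hf
  have hzero : ∀ s : Finset (Fin n), s ≠ Finset.univ → (∀ i, s ≠ Finset.univ.erase i) → f s = 0 := by
    intro s hs1 hs2
    have h2 : 1 < sᶜ.card := by
      rcases Nat.lt_or_ge 1 sᶜ.card with h | h
      · exact h
      interval_cases h' : sᶜ.card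
      · exact absurd (by simpa [Finset.card_eq_zero, compl_eq_empty_iff] using h') hs1
      · obtain ⟨i, hi⟩ := Finset.card_eq_one.mp h'
        exact absurd (by rw [← compl_compl s, hi, Finset.compl_singleton]) (hs2 i)
    obtain ⟨i, hi, j, hj, hij⟩ := Finset.one_lt_card.mp h2
    rw [Finset.mem_compl] at hi hj
    exact (Matrix.detRowAlternating (R := ℝ) (n := Fin n)).map_eq_zero_of_eq _
      (by rw [Finset.piecewise_eq_of_notMem _ _ _ hi, Finset.piecewise_eq_of_notMem _ _ _ hj]) hij
  set T : Finset (Finset (Fin n)) :=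
    insert Finset.univ (Finset.univ.image fun i => Finset.univ.erase i) with hT
  have hsum : ∑ s : Finset (Fin n), f s = ∑ s ∈ T, f s := by
    refine (Finset.sum_subset (Finset.subset_univ T) fun s _ hs => ?_).symm
    rw [hT, Finset.mem_insert, Finset.mem_image] at hs
    push_neg at hs
    exact hzero s hs.1 fun i h => hs.2 i (Finset.mem_univ i) h.symm
  change ∑ s : Finset (Fin n), f s = _
  rw [hsum, hT, Finset.sum_insert, Finset.sum_image]
  · congr 1
    · rw [hf]
      simp only [Finset.piecewise_univ]
      rw [show Matrix.detRowAlternating (n := Fin n) (R := ℝ) m = Matrix.det m from rfl, hmd,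
        Matrix.det_diagonal]
    · rw [Finset.mul_sum]
      refine Finset.sum_congr rfl fun i _ => ?_
      have hpw : (Finset.univ.erase i).piecewise m m' = (Matrix.diagonal d).updateRow i (fun _ => A) := by
        ext a b
        by_cases h : a = i
        · subst h; simp [Finset.piecewise_eq_of_notMem, m']
        · rw [Finset.piecewise_eq_of_mem _ _ _ (Finset.mem_erase.mpr ⟨h, Finset.mem_univ a⟩),
            Matrix.updateRow_ne h, ← hmd]
      rw [hf]
      show Matrix.det _ = _
      rw [hpw, det_updateRow_eq, Matrix.adjugate_diagonal]
      simp [Matrix.diagonal_apply, Finset.sum_ite_eq, mul_comm]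
  · intro x _ y _ h
    by_contra hxy
    have hx : x ∈ Finset.univ.erase y := Finset.mem_erase.mpr ⟨hxy, Finset.mem_univ x⟩
    rw [← Eq.trans h (rfl : Finset.univ.erase y = Finset.univ.erase y)] at hx
    exact Finset.notMem_erase x Finset.univ hx
  · rw [Finset.mem_image]
    rintro ⟨i, -, h⟩
    have := Finset.notMem_erase i Finset.univ
    rw [h] at this
    exact this (Finset.mem_univ i)

/-- The k-th elementary symmetric polynomial σ_k(λ₁,…,λₙ), with σ₀ = 1. -/
noncomputable def esymm (n k : ℕ) (lam : Fin n → ℝ) : ℝ :=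
  ∑ s ∈ Finset.powersetCard k (Finset.univ : Finset (Fin n)), ∏ i ∈ s, lam i

/-- determinant identity for H_{ij} = (A + 2λᵢδ_{ij})/((1+λᵢ²)(1+λⱼ²)). -/
theorem det_exponentiation_matrix
    (n : ℕ) (hn : 1 ≤ n) (lam : Fin n → ℝ) (A : ℝ) :
    Matrix.det (Matrix.of fun i j : Fin n =>
        (A + 2 * lam i * (if i = j then (1 : ℝ) else 0)) /
          ((1 + lam i ^ 2) * (1 + lam j ^ 2))) =
      (A * 2 ^ (n - 1) * esymm n (n - 1) lam + 2 ^ n * esymm n n lam) /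
        ∏ i, (1 + lam i ^ 2) ^ 2 := by
  classical
  have hpos : ∀ i : Fin n, (1 + lam i ^ 2) ≠ 0 := fun i => by positivity
  set c : Fin n → ℝ := fun i => (1 + lam i ^ 2)⁻¹ with hc
  have hfac : (Matrix.of fun i j : Fin n =>
        (A + 2 * lam i * (if i = j then (1 : ℝ) else 0)) /
          ((1 + lam i ^ 2) * (1 + lam j ^ 2)))
      = Matrix.diagonal c * (Matrix.of fun i j : Fin n =>
          (if i = j then 2 * lam i else 0) + A) * Matrix.diagonal c := by
    ext i j
    simp only [Matrix.mul_diagonal, Matrix.diagonal_mul, Matrix.of_apply, hc]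
    by_cases h : i = j
    · subst h
      field_simp
      simp [add_comm]
    · simp only [h, if_false]
      field_simp
      ring
  rw [hfac, Matrix.det_mul, Matrix.det_mul, Matrix.det_diagonal, det_diag_add_const]
  have h2n : ∏ i : Fin n, 2 * lam i = 2 ^ n * ∏ i, lam i := by
    rw [Finset.prod_mul_distrib, Finset.prod_const, Finset.card_univ, Fintype.card_fin]
  have h2e : ∀ i : Fin n, ∏ j ∈ Finset.univ.erase i, 2 * lam j
      = 2 ^ (n - 1) * ∏ j ∈ Finset.univ.erase i, lam j := by
    intro i
    rw [Finset.prod_mul_distrib, Finset.prod_const, Finset.card_erase_of_mem (Finset.mem_univ i),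
      Finset.card_univ, Fintype.card_fin]
  have hes_n : esymm n n lam = ∏ i, lam i := by
    have h1 : Finset.powersetCard n (Finset.univ : Finset (Fin n)) = {Finset.univ} := by
      simpa using Finset.powersetCard_self (Finset.univ : Finset (Fin n))
    rw [esymm, h1, Finset.sum_singleton]
  have hes : esymm n (n - 1) lam = ∑ i, ∏ j ∈ Finset.univ.erase i, lam j := by
    rw [esymm]
    have himg : Finset.powersetCard (n - 1) (Finset.univ : Finset (Fin n))
        = Finset.univ.image fun i => Finset.univ.erase i := by
      ext s
      simp only [Finset.mem_powersetCard, Finset.mem_image, Finset.mem_univ, true_and]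
      constructor
      · rintro ⟨-, hcard⟩
        have hcc : sᶜ.card = 1 := by
          have h := Finset.card_compl s
          rw [Fintype.card_fin] at h
          omega
        obtain ⟨i, hi⟩ := Finset.card_eq_one.mp hcc
        exact ⟨i, by rw [← compl_compl s, hi, Finset.compl_singleton]⟩
      · rintro ⟨i, rfl⟩
        exact ⟨Finset.subset_univ _, by
          rw [Finset.card_erase_of_mem (Finset.mem_univ i), Finset.card_univ, Fintype.card_fin]⟩
    rw [himg, Finset.sum_image]
    intro x _ y _ h
    by_contra hxy
    have hx : x ∈ Finset.univ.erase y := Finset.mem_erase.mpr ⟨hxy, Finset.mem_univ x⟩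
    rw [← Eq.trans h (rfl : Finset.univ.erase y = Finset.univ.erase y)] at hx
    exact Finset.notMem_erase x Finset.univ hx
  have hprodc : ∏ i, c i = (∏ i, (1 + lam i ^ 2))⁻¹ := by
    rw [hc, ← Finset.prod_inv_distrib]
  have hsq : ∏ i, (1 + lam i ^ 2) ^ 2 = (∏ i, (1 + lam i ^ 2)) ^ 2 := by
    rw [← Finset.prod_pow]
  have hP : (∏ i, (1 + lam i ^ 2)) ≠ 0 := Finset.prod_ne_zero_iff.mpr fun i _ => hpos i
  rw [h2n, hes_n, hes, hprodc, hsq]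
  simp only [h2e, ← Finset.mul_sum]
  field_simp
  ring
end
end

section
/- Let n ≥ 3 be an integer and K > 0. Let λ₁ ≥ λ₂ ≥ … ≥ λₙ be real numbers with λ_j ≤ K for all j, λₙ < 0, and Σ_{j=1}^n arctan λ_j ≥ (n−2)π/2. Then λ_{n−1} > tan(T), where T = π/2 − arctan(K). -/
open Real

/-- lower bound λ_{n−1} > tan(π/2 − arctan K) for ordered λ with λₙ < 0,
λⱼ ≤ K, and ∑ arctan λⱼ ≥ (n−2)π/2. Here `lam i` is λ_{i+1} (0-indexed). -/
theorem second_smallest_eigenvalue_lower_bound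
    (n : ℕ) (hn : 3 ≤ n) (K : ℝ) (hK : 0 < K) (lam : Fin n → ℝ)
    (hord : ∀ i j : Fin n, i ≤ j → lam j ≤ lam i)
    (hbd : ∀ j, lam j ≤ K)
    (hneg : lam ⟨n - 1, by omega⟩ < 0)
    (hθ : ((n : ℝ) - 2) * Real.pi / 2 ≤ ∑ j, Real.arctan (lam j)) :
    Real.tan (Real.pi / 2 - Real.arctan K) < lam ⟨n - 2, by omega⟩ := by
  set i1 : Fin n := ⟨n - 1, by omega⟩
  set i2 : Fin n := ⟨n - 2, by omega⟩
  have hne : i2 ≠ i1 := fun h => by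
    have := congrArg Fin.val h
    simp only [i1, i2] at this
    omega
  set T : ℝ := Real.pi / 2 - Real.arctan K with hT
  have hTpos : 0 < T := by
    have := Real.arctan_lt_pi_div_two K
    simp [hT]; linarith
  have hTlt : T < Real.pi / 2 := by
    have := Real.arctan_strictMono (show (0:ℝ) < K from hK)
    rw [Real.arctan_zero] at this
    simp only [hT]; linarith
  -- split the sum
  have hsplit : (∑ j, Real.arctan (lam j)) =
      (∑ j ∈ (Finset.univ.erase i1).erase i2, Real.arctan (lam j))
        + Real.arctan (lam i2) + Real.arctan (lam i1) := by
    rw [Finset.sum_erase_add _ _ (Finset.mem_erase.mpr ⟨hne, Finset.mem_univ _⟩),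
      Finset.sum_erase_add _ _ (Finset.mem_univ i1)]
  have hcard : ((Finset.univ.erase i1).erase i2).card = n - 2 := by
    rw [Finset.card_erase_of_mem (Finset.mem_erase.mpr ⟨hne, Finset.mem_univ _⟩),
      Finset.card_erase_of_mem (Finset.mem_univ i1)]
    simp [Finset.card_univ]
    omega
  have hbound : (∑ j ∈ (Finset.univ.erase i1).erase i2, Real.arctan (lam j))
      ≤ ((n : ℝ) - 2) * Real.arctan K := by
    calc (∑ j ∈ (Finset.univ.erase i1).erase i2, Real.arctan (lam j))
        ≤ ∑ _j ∈ (Finset.univ.erase i1).erase i2, Real.arctan K := by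
          apply Finset.sum_le_sum
          intro j _
          exact Real.arctan_strictMono.monotone (hbd j)
      _ = ((n : ℝ) - 2) * Real.arctan K := by
          rw [Finset.sum_const, hcard, nsmul_eq_mul]
          congr 1
          have : (2 : ℝ) ≤ (n : ℝ) := by exact_mod_cast (by omega : 2 ≤ n)
          push_cast [Nat.cast_sub (by omega : 2 ≤ n)]
          ring
  have hlast : Real.arctan (lam i1) < 0 := by
    have := Real.arctan_strictMono hneg
    simpa using this
  have hmain : T < Real.arctan (lam i2) := by
    have h1 : ((n : ℝ) - 2) * T ≤ Real.arctan (lam i2) + Real.arctan (lam i1)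
        + 0 := by
      have := hθ
      rw [hsplit] at this
      have : ((n : ℝ) - 2) * Real.pi / 2 - ((n : ℝ) - 2) * Real.arctan K
          ≤ Real.arctan (lam i2) + Real.arctan (lam i1) := by linarith
      simpa [hT, mul_sub] using by linarith [this]
    have hn2 : (1 : ℝ) ≤ (n : ℝ) - 2 := by
      have : (3 : ℝ) ≤ (n : ℝ) := by exact_mod_cast hn
      linarith
    nlinarith [hlast, hTpos]
  have harctanlt : Real.arctan (lam i2) < Real.pi / 2 := Real.arctan_lt_pi_div_two _
  have := Real.tan_lt_tan_of_nonneg_of_lt_pi_div_two (le_of_lt hTpos) harctanlt hmain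
  rwa [Real.tan_arctan] at this
end

section
/- Let n ≥ 3 and let λ₁,…,λₙ be real numbers with Σ_{j=1}^n arctan λ_j ≥ (n−2)π/2. Then max_{1≤j≤n} λ_j ≥ tan( π/2 − π/n ), and consequently log sqrt( 1 + (max_{1≤j≤n} λ_j)² ) ≥ (1/2)·log(4/3). -/
open Real

/-- at critical/supercritical phase the largest eigenvalue is at least
tan(π/2 − π/n), hence b = log√(1+λ_max²) ≥ (1/2)log(4/3). -/
theorem largest_eigenvalue_lower_bound
    (n : ℕ) (hn : 3 ≤ n) (lam : Fin n → ℝ)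
    (hθ : ((n : ℝ) - 2) * Real.pi / 2 ≤ ∑ j, Real.arctan (lam j)) :
    Real.tan (Real.pi / 2 - Real.pi / n) ≤ ⨆ j, lam j ∧
    (1 / 2) * Real.log (4 / 3) ≤ Real.log (Real.sqrt (1 + (⨆ j, lam j) ^ 2)) := by
  have hne : Nonempty (Fin n) := ⟨⟨0, by omega⟩⟩
  set M := ⨆ j, lam j with hM
  have hpi := Real.pi_pos
  have hn3 : (3 : ℝ) ≤ n := by exact_mod_cast hn
  have hn0 : (0 : ℝ) < n := by linarith
  have hle : ∀ j, lam j ≤ M :=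
    fun j => le_ciSup (Set.Finite.bddAbove (Set.finite_range lam)) j
  have h1 : ∑ j, Real.arctan (lam j) ≤ (n : ℝ) * Real.arctan M := by
    calc ∑ j, Real.arctan (lam j) ≤ ∑ _j : Fin n, Real.arctan M :=
          Finset.sum_le_sum fun j _ => Real.arctan_strictMono.monotone (hle j)
      _ = (n : ℝ) * Real.arctan M := by
          simp [Finset.sum_const, nsmul_eq_mul]
  have h2 : Real.pi / 2 - Real.pi / n ≤ Real.arctan M := by
    have h3 : ((n : ℝ) - 2) * Real.pi / 2 ≤ (n : ℝ) * Real.arctan M := le_trans hθ h1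
    have hpn : Real.pi / n * n = Real.pi := div_mul_cancel₀ _ (ne_of_gt hn0)
    nlinarith [Real.arctan_lt_pi_div_two M]
  have harcmem : Real.arctan M ∈ Set.Ioo (-(Real.pi / 2)) (Real.pi / 2) :=
    ⟨Real.neg_pi_div_two_lt_arctan M, Real.arctan_lt_pi_div_two M⟩
  have hpn : Real.pi / n ≤ Real.pi / 3 := by
    apply div_le_div_of_nonneg_left hpi.le (by norm_num) hn3
  have hpn0 : 0 < Real.pi / n := div_pos hpi hn0
  have hmem1 : Real.pi / 2 - Real.pi / n ∈ Set.Ioo (-(Real.pi / 2)) (Real.pi / 2) := by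
    constructor <;> nlinarith
  have hmono := Real.strictMonoOn_tan.monotoneOn
  have hfirst : Real.tan (Real.pi / 2 - Real.pi / n) ≤ M := by
    have := hmono hmem1 harcmem h2
    rwa [Real.tan_arctan] at this
  refine ⟨hfirst, ?_⟩
  -- tan (π/6) = 1/√3
  have hmem6 : Real.pi / 6 ∈ Set.Ioo (-(Real.pi / 2)) (Real.pi / 2) := by
    constructor <;> nlinarith
  have h6le : Real.pi / 6 ≤ Real.pi / 2 - Real.pi / n := by nlinarith
  have htan6 : Real.tan (Real.pi / 6) = 1 / Real.sqrt 3 := by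
    rw [Real.tan_eq_sin_div_cos, Real.sin_pi_div_six, Real.cos_pi_div_six]
    have : Real.sqrt 3 ≠ 0 := by positivity
    field_simp
  have hM6 : 1 / Real.sqrt 3 ≤ M := by
    have := hmono hmem6 hmem1 h6le
    rw [htan6] at this
    linarith [hfirst]
  have hs3 : Real.sqrt 3 ^ 2 = 3 := Real.sq_sqrt (by norm_num)
  have hs3pos : 0 < Real.sqrt 3 := Real.sqrt_pos.mpr (by norm_num)
  have hM2 : 4 / 3 ≤ 1 + M ^ 2 := by
    have hM0 : 0 ≤ M := le_trans (by positivity) hM6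
    have : (1 / Real.sqrt 3) ^ 2 ≤ M ^ 2 := by
      apply pow_le_pow_left₀ (by positivity) hM6
    rw [div_pow, hs3] at this
    nlinarith
  have hlog : Real.log (Real.sqrt (1 + M ^ 2)) = (1 / 2) * Real.log (1 + M ^ 2) := by
    rw [Real.log_sqrt (by positivity)]; ring
  rw [hlog]
  have : Real.log (4 / 3) ≤ Real.log (1 + M ^ 2) :=
    Real.log_le_log (by norm_num) hM2
  linarith
end

section
/- Let n ≥ 1 and let λ₁,…,λₙ be real numbers. Set Θ = Σ_{j=1}^n arctan λ_j and V = ∏_{j=1}^n sqrt(1+λ_j²). Then the following identity holds: ( Σ_{j=1}^n 1/(1+λ_j²) ) · V = cos(Θ) · Σ_{k≥0, 2k<n} (−1)^k (n−2k) σ_{2k}(λ) − sin(Θ) · Σ_{k≥1, 2k−1<n} (−1)^k (n−2k+1) σ_{2k−1}(λ). -/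
open Real

noncomputable section

namespace ConformalityAux

lemma prod_one_add {ι : Type*} [DecidableEq ι] (s : Finset ι) (x : ι → ℂ) :
    ∏ i ∈ s, (1 + x i) = ∑ t ∈ s.powerset, ∏ i ∈ t, x i := by
  simpa [add_comm] using Finset.prod_add x (fun _ => (1:ℂ)) s

lemma sum_prod_erase {ι : Type*} [DecidableEq ι] (s : Finset ι) (x : ι → ℂ) :
    ∑ j ∈ s, ∏ i ∈ s.erase j, (1 + x i)
      = ∑ t ∈ s.powerset, ((s.card - t.card : ℕ) : ℂ) * ∏ i ∈ t, x i := by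
  have h1 : ∀ j ∈ s, (s.erase j).powerset = s.powerset.filter (fun t => j ∉ t) := by
    intro j _
    ext t
    simp [Finset.mem_powerset, Finset.subset_erase, and_comm]
  calc ∑ j ∈ s, ∏ i ∈ s.erase j, (1 + x i)
      = ∑ j ∈ s, ∑ t ∈ s.powerset, if j ∉ t then ∏ i ∈ t, x i else 0 := by
        refine Finset.sum_congr rfl fun j hj => ?_
        rw [prod_one_add, h1 j hj, Finset.sum_filter]
    _ = ∑ t ∈ s.powerset, ∑ j ∈ s, if j ∉ t then ∏ i ∈ t, x i else 0 := Finset.sum_comm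
    _ = ∑ t ∈ s.powerset, ((s.card - t.card : ℕ) : ℂ) * ∏ i ∈ t, x i := by
        refine Finset.sum_congr rfl fun t ht => ?_
        rw [← Finset.sum_filter, Finset.sum_const, ← Finset.sdiff_eq_filter,
          Finset.card_sdiff_of_subset (Finset.mem_powerset.mp ht), nsmul_eq_mul]

lemma S1_eq (n : ℕ) (lam : Fin n → ℝ) :
    ∑ j : Fin n, ∏ i ∈ Finset.univ.erase j, (1 + (lam i : ℂ) * Complex.I)
      = ∑ m ∈ Finset.range (n + 1), ((n - m : ℕ) : ℂ) * Complex.I ^ m * (esymm n m lam : ℂ) := by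
  rw [sum_prod_erase, Finset.sum_powerset]
  simp only [Finset.card_univ, Fintype.card_fin]
  refine Finset.sum_congr rfl fun m hm => ?_
  have : ∀ t ∈ Finset.powersetCard m (Finset.univ : Finset (Fin n)),
      ((n - t.card : ℕ) : ℂ) * ∏ i ∈ t, ((lam i : ℂ) * Complex.I)
        = ((n - m : ℕ) : ℂ) * Complex.I ^ m * ∏ i ∈ t, (lam i : ℂ) := by
    intro t ht
    have hc : t.card = m := (Finset.mem_powersetCard.mp ht).2
    rw [Finset.prod_mul_distrib, Finset.prod_const, hc]
    ring
  rw [Finset.sum_congr rfl this, ← Finset.mul_sum, esymm]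
  push_cast
  ring

lemma key (n : ℕ) (lam : Fin n → ℝ) :
    ∑ m ∈ Finset.range (n + 1), ((n - m : ℕ) : ℂ) * Complex.I ^ m * (esymm n m lam : ℂ)
      = ((∑ k ∈ Finset.range ((n + 1) / 2),
            (-1 : ℝ) ^ k * ((n : ℝ) - 2 * k) * esymm n (2 * k) lam : ℝ) : ℂ)
        - ((∑ k ∈ Finset.Icc 1 (n / 2),
            (-1 : ℝ) ^ k * ((n : ℝ) - 2 * k + 1) * esymm n (2 * k - 1) lam : ℝ) : ℂ) * Complex.I := by
  rw [← Finset.sum_filter_add_sum_filter_not (Finset.range (n + 1)) (fun m => Even m)]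
  have heven : ∑ m ∈ (Finset.range (n + 1)).filter (fun m => Even m),
      ((n - m : ℕ) : ℂ) * Complex.I ^ m * (esymm n m lam : ℂ)
      = ∑ k ∈ Finset.range ((n + 1) / 2),
          (-1 : ℂ) ^ k * ((n : ℂ) - 2 * k) * (esymm n (2 * k) lam : ℂ) := by
    refine (Finset.sum_of_injOn (fun k => 2 * k) ?_ ?_ ?_ ?_).symm
    · intro a _ b _ h
      beta_reduce at h
      omega
    · intro k hk
      have hk' : k < (n + 1) / 2 := by simpa using hk
      simp only [Finset.coe_filter, Set.mem_setOf_eq, Finset.mem_range]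
      exact ⟨by omega, even_two_mul k⟩
    · intro m hm him
      simp only [Finset.mem_filter, Finset.mem_range] at hm
      obtain ⟨hm1, r, hr⟩ := hm
      have hnm : n - m = 0 := by
        have : ¬ (m / 2 < (n + 1) / 2) := fun h =>
          him ⟨m / 2, by simpa using h, by beta_reduce; omega⟩
        omega
      simp [hnm]
    · intro k hk
      have hk' : k < (n + 1) / 2 := by simpa using hk
      have h2k : 2 * k ≤ n := by omega
      beta_reduce
      have hc : ((n - 2 * k : ℕ) : ℂ) = (n : ℂ) - 2 * k := by push_cast [h2k]; ring
      rw [hc, pow_mul, Complex.I_sq]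
      ring
  have hodd : ∑ m ∈ (Finset.range (n + 1)).filter (fun m => ¬ Even m),
      ((n - m : ℕ) : ℂ) * Complex.I ^ m * (esymm n m lam : ℂ)
      = ∑ k ∈ Finset.Icc 1 (n / 2),
          -((-1 : ℂ) ^ k * ((n : ℂ) - 2 * k + 1) * (esymm n (2 * k - 1) lam : ℂ) * Complex.I) := by
    refine (Finset.sum_of_injOn (fun k => 2 * k - 1) ?_ ?_ ?_ ?_).symm
    · intro a ha b hb h
      have ha' : 1 ≤ a ∧ a ≤ n / 2 := by simpa using ha
      have hb' : 1 ≤ b ∧ b ≤ n / 2 := by simpa using hb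
      beta_reduce at h
      omega
    · intro k hk
      have hk' : 1 ≤ k ∧ k ≤ n / 2 := by simpa using hk
      simp only [Finset.coe_filter, Set.mem_setOf_eq, Finset.mem_range]
      constructor
      · omega
      · rw [Nat.not_even_iff_odd, Nat.odd_iff]; omega
    · intro m hm him
      simp only [Finset.mem_filter, Finset.mem_range, Nat.not_even_iff_odd] at hm
      obtain ⟨hm1, hm2⟩ := hm
      have hmod : m % 2 = 1 := Nat.odd_iff.mp hm2
      have hnm : n - m = 0 := by
        have : ¬ (1 ≤ (m + 1) / 2 ∧ (m + 1) / 2 ≤ n / 2) := by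
          intro h
          exact him ⟨(m + 1) / 2, by simpa using h, by beta_reduce; omega⟩
        omega
      simp [hnm]
    · intro k hk
      have hk' : 1 ≤ k ∧ k ≤ n / 2 := by simpa using hk
      obtain ⟨m, rfl⟩ : ∃ m, k = m + 1 := ⟨k - 1, by omega⟩
      beta_reduce
      have h2k : 2 * (m + 1) - 1 = 2 * m + 1 := by omega
      have hle : 2 * m + 1 ≤ n := by omega
      have hc : ((n - (2 * m + 1) : ℕ) : ℂ) = (n : ℂ) - 2 * ((m : ℂ) + 1) + 1 := by
        push_cast [hle]; ring
      have hI : Complex.I ^ (2 * m + 1) = (-1) ^ m * Complex.I := by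
        rw [pow_succ, pow_mul, Complex.I_sq]
      rw [h2k, hc, hI]
      push_cast
      ring
  rw [heven, hodd, Finset.sum_neg_distrib]
  push_cast
  rw [Finset.sum_mul, ← sub_eq_add_neg]

lemma factor_eq (x : ℝ) :
    1 + (x : ℂ) * Complex.I
      = (Real.sqrt (1 + x ^ 2) : ℂ) * Complex.exp ((Real.arctan x : ℂ) * Complex.I) := by
  have hpos : (0 : ℝ) < 1 + x ^ 2 := by positivity
  have hs : Real.sqrt (1 + x ^ 2) ≠ 0 := by positivity
  rw [Complex.exp_mul_I, ← Complex.ofReal_cos, ← Complex.ofReal_sin,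
    Real.cos_arctan, Real.sin_arctan]
  have hs' : (Real.sqrt (1 + x ^ 2) : ℂ) ≠ 0 := by exact_mod_cast hs
  push_cast
  field_simp

lemma prod_factor {n : ℕ} (s : Finset (Fin n)) (lam : Fin n → ℝ) :
    ∏ i ∈ s, (1 + (lam i : ℂ) * Complex.I)
      = ((∏ i ∈ s, Real.sqrt (1 + lam i ^ 2) : ℝ) : ℂ)
        * Complex.exp (((∑ i ∈ s, Real.arctan (lam i) : ℝ) : ℂ) * Complex.I) := by
  calc ∏ i ∈ s, (1 + (lam i : ℂ) * Complex.I)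
      = ∏ i ∈ s, ((Real.sqrt (1 + lam i ^ 2) : ℂ)
          * Complex.exp ((Real.arctan (lam i) : ℂ) * Complex.I)) :=
        Finset.prod_congr rfl fun i _ => factor_eq (lam i)
    _ = _ := by
        rw [Finset.prod_mul_distrib, ← Complex.exp_sum]
        push_cast
        rw [Finset.sum_mul]

end ConformalityAux

/-- the trace of the conformality identity. Note that for k : ℕ,
`2k < n ↔ k < (n+1)/2` and `(k ≥ 1 ∧ 2k−1 < n) ↔ k ∈ Icc 1 (n/2)`. -/
theorem conformality_identity_trace
    (n : ℕ) (hn : 1 ≤ n) (lam : Fin n → ℝ) :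
    (∑ j, 1 / (1 + lam j ^ 2)) * ∏ j, Real.sqrt (1 + lam j ^ 2) =
      Real.cos (∑ j, Real.arctan (lam j)) *
        ∑ k ∈ Finset.range ((n + 1) / 2),
          (-1 : ℝ) ^ k * ((n : ℝ) - 2 * k) * esymm n (2 * k) lam -
      Real.sin (∑ j, Real.arctan (lam j)) *
        ∑ k ∈ Finset.Icc 1 (n / 2),
          (-1 : ℝ) ^ k * ((n : ℝ) - 2 * k + 1) * esymm n (2 * k - 1) lam := by
  classical
  set Θ : ℝ := ∑ j, Real.arctan (lam j) with hΘ
  set V : ℝ := ∏ j, Real.sqrt (1 + lam j ^ 2) with hV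
  set S1 : ℂ := ∑ j : Fin n, ∏ i ∈ Finset.univ.erase j, (1 + (lam i : ℂ) * Complex.I) with hS1
  set E : ℂ := Complex.exp (((-Θ : ℝ) : ℂ) * Complex.I) with hE
  -- Left-hand side equals (S1 * E).re
  have hL : (∑ j, 1 / (1 + lam j ^ 2)) * V = (S1 * E).re := by
    rw [hS1, Finset.sum_mul, Finset.sum_mul, Complex.re_sum]
    refine Finset.sum_congr rfl fun j _ => ?_
    have hpf := ConformalityAux.prod_factor (Finset.univ.erase j) lam
    have hsum : (∑ i ∈ Finset.univ.erase j, Real.arctan (lam i)) + Real.arctan (lam j) = Θ := by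
      rw [hΘ]
      exact Finset.sum_erase_add _ _ (Finset.mem_univ j)
    have hprod : (∏ i ∈ Finset.univ.erase j, Real.sqrt (1 + lam i ^ 2))
        * Real.sqrt (1 + lam j ^ 2) = V := by
      rw [hV]
      exact Finset.prod_erase_mul _ _ (Finset.mem_univ j)
    rw [hpf, hE, mul_assoc, ← Complex.exp_add]
    have harg : ((∑ i ∈ Finset.univ.erase j, Real.arctan (lam i) : ℝ) : ℂ) * Complex.I
        + ((-Θ : ℝ) : ℂ) * Complex.I = ((-(Real.arctan (lam j)) : ℝ) : ℂ) * Complex.I := by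
      push_cast
      rw [← hsum]
      push_cast
      ring
    rw [harg]
    rw [Complex.re_ofReal_mul, Complex.exp_ofReal_mul_I_re, Real.cos_neg, Real.cos_arctan]
    have hpos : (0 : ℝ) < 1 + lam j ^ 2 := by positivity
    have hsq : Real.sqrt (1 + lam j ^ 2) ^ 2 = 1 + lam j ^ 2 :=
      Real.sq_sqrt (by positivity)
    have hsne : Real.sqrt (1 + lam j ^ 2) ≠ 0 := by positivity
    rw [← hprod, ← hsq]
    field_simp
    rw [Real.sqrt_sq (Real.sqrt_nonneg _)]
  -- Right-hand side equals (S1 * E).re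
  have hR : (S1 * E).re =
      Real.cos Θ *
        ∑ k ∈ Finset.range ((n + 1) / 2),
          (-1 : ℝ) ^ k * ((n : ℝ) - 2 * k) * esymm n (2 * k) lam -
      Real.sin Θ *
        ∑ k ∈ Finset.Icc 1 (n / 2),
          (-1 : ℝ) ^ k * ((n : ℝ) - 2 * k + 1) * esymm n (2 * k - 1) lam := by
    rw [hS1, ConformalityAux.S1_eq, ConformalityAux.key, hE, Complex.exp_mul_I,
      ← Complex.ofReal_cos, ← Complex.ofReal_sin, Real.cos_neg, Real.sin_neg]
    set A : ℝ := ∑ k ∈ Finset.range ((n + 1) / 2),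
          (-1 : ℝ) ^ k * ((n : ℝ) - 2 * k) * esymm n (2 * k) lam
    set C : ℝ := ∑ k ∈ Finset.Icc 1 (n / 2),
          (-1 : ℝ) ^ k * ((n : ℝ) - 2 * k + 1) * esymm n (2 * k - 1) lam
    push_cast
    simp [Complex.mul_re, Complex.sub_re, Complex.sub_im, Complex.add_re, Complex.add_im,
      Complex.mul_im, Complex.I_re, Complex.I_im, Complex.ofReal_re, Complex.ofReal_im,
      Complex.cos_ofReal_re, Complex.sin_ofReal_re]
    ring
  rw [hL, hR]
end
end
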